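/- Let $n \ge 1$, let $w$ be a weight on $\mathbb{R}^n$, let $Q$ be a cube, and let $\delta > 0$. Then $\frac{1}{|Q|} \int_Q w^{1+\delta} \le \left( \frac{1}{|Q|} \int_Q w \right)^{1+\delta} + 2^n \frac{\delta}{\delta + 1} \frac{1}{|Q|} \int_Q (M_{d,Q} w)^{1+\delta}$, where $M_{d,Q}$ denotes the dyadic maximal operator relative to $Q$, i.e., $M_{d,Q} v(x) = \sup \{ \frac{1}{|R|} \int_R |v| : R \in \mathcal{D}(Q), \, x \in R \}$ with $\mathcal{D}(Q)$ the family of dyadic subcubes of $Q$. -/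

import Mathlib

open MeasureTheory ENNReal Metric Set Filter
open NNReal Topology

noncomputable section

/-- The uncentered Hardy–Littlewood maximal operator over axis-parallel cubes.
Axis-parallel cubes in `ℝⁿ = Fin n → ℝ` are exactly the closed balls of the
sup metric, so a cube with center `c` and side length `2r` is `closedBall c r`. -/
def maxOp (n : ℕ) (f : (Fin n → ℝ) → ℝ≥0∞) (x : Fin n → ℝ) : ℝ≥0∞ :=
  ⨆ (c : Fin n → ℝ) (r : ℝ) (_ : 0 < r) (_ : x ∈ closedBall c r),
    (volume (closedBall c r))⁻¹ * ∫⁻ y in closedBall c r, f y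

/-- `ℝ≥0∞`-valued characteristic function of a set. -/
def chi (n : ℕ) (Q : Set (Fin n → ℝ)) : (Fin n → ℝ) → ℝ≥0∞ := Q.indicator 1

/-- The `C_p`-tail of the weight `w` at the cube `Q`: `∫_{ℝⁿ} (Mχ_Q)^p w`. -/
def cpTail (n : ℕ) (p : ℝ) (w : (Fin n → ℝ) → ℝ) (Q : Set (Fin n → ℝ)) : ℝ≥0∞ :=
  ∫⁻ x, (maxOp n (chi n Q) x) ^ p * ENNReal.ofReal (w x)

/-- The `C_p` constant `[w]_{C_p} = sup_Q (∫_Q M(χ_Q w)) / (∫_{ℝⁿ} (Mχ_Q)^p w)`. -/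
def cpConst (n : ℕ) (p : ℝ) (w : (Fin n → ℝ) → ℝ) : ℝ≥0∞ :=
  ⨆ (c : Fin n → ℝ) (r : ℝ) (_ : 0 < r),
    (∫⁻ x in closedBall c r,
        maxOp n ((closedBall c r).indicator fun y => ENNReal.ofReal (w y)) x) /
      cpTail n p w (closedBall c r)


/-- The dyadic subcube of `Q = closedBall c r` of generation `m` indexed by `j`. -/
def dyadicSub {n : ℕ} (c : Fin n → ℝ) (r : ℝ) (m : ℕ) (j : Fin n → ℕ) :
    Set (Fin n → ℝ) :=
  closedBall (fun i => c i - r + (2 * (j i : ℝ) + 1) * (r / 2 ^ m)) (r / 2 ^ m)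

/-- The dyadic maximal operator relative to the cube `Q = closedBall c r`. -/
def dyadicMax {n : ℕ} (c : Fin n → ℝ) (r : ℝ) (v : (Fin n → ℝ) → ℝ≥0∞)
    (x : Fin n → ℝ) : ℝ≥0∞ :=
  ⨆ (m : ℕ) (j : Fin n → ℕ) (_ : ∀ i, j i < 2 ^ m) (_ : x ∈ dyadicSub c r m j),
    (volume (dyadicSub c r m j))⁻¹ * ∫⁻ y in dyadicSub c r m j, v y

namespace St16

variable {n : ℕ} {c : Fin n → ℝ} {r : ℝ}

lemma mem_iff (hr : 0 < r) {m : ℕ} {j : Fin n → ℕ} {x : Fin n → ℝ} :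
    x ∈ dyadicSub c r m j ↔ ∀ i,
      c i - r + 2 * (j i : ℝ) * (r / 2 ^ m) ≤ x i ∧
      x i ≤ c i - r + (2 * (j i : ℝ) + 2) * (r / 2 ^ m) := by
  have hρ : (0:ℝ) ≤ r / 2 ^ m := by positivity
  rw [dyadicSub, closedBall_pi _ hρ, Set.mem_univ_pi]
  refine forall_congr' fun i => ?_
  rw [Real.closedBall_eq_Icc, Set.mem_Icc]
  constructor <;> intro h <;> constructor <;> linarith [h.1, h.2]

lemma volume_eq (hr : 0 < r) (m : ℕ) (j : Fin n → ℕ) :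
    volume (dyadicSub c r m j) = ENNReal.ofReal ((2 * (r / 2 ^ m)) ^ n) := by
  rw [dyadicSub, Real.volume_pi_closedBall _ (by positivity : (0:ℝ) ≤ r / 2 ^ m),
    Fintype.card_fin]

lemma volume_ne_zero (hr : 0 < r) (m : ℕ) (j : Fin n → ℕ) :
    volume (dyadicSub c r m j) ≠ 0 := by
  rw [volume_eq hr]
  have : (0:ℝ) < (2 * (r / 2 ^ m)) ^ n := by positivity
  simp [ENNReal.ofReal_eq_zero, not_le, this]

lemma volume_ne_top (hr : 0 < r) (m : ℕ) (j : Fin n → ℕ) :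
    volume (dyadicSub c r m j) ≠ ⊤ := by
  rw [volume_eq hr]; exact ENNReal.ofReal_ne_top

lemma subset_Q (hr : 0 < r) {m : ℕ} {j : Fin n → ℕ} (hj : ∀ i, j i < 2 ^ m) :
    dyadicSub c r m j ⊆ closedBall c r := by
  intro x hx
  rw [mem_iff hr] at hx
  rw [closedBall_pi _ hr.le, Set.mem_univ_pi]
  intro i
  rw [Real.closedBall_eq_Icc, Set.mem_Icc]
  obtain ⟨h1, h2⟩ := hx i
  have hj' : (j i : ℝ) + 1 ≤ 2 ^ m := by exact_mod_cast Nat.succ_le_of_lt (hj i)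
  have hρ : (0:ℝ) < r / 2 ^ m := by positivity
  have h2m : (2:ℝ) ^ m * (r / 2 ^ m) = r := by field_simp
  constructor <;> nlinarith [mul_nonneg (Nat.cast_nonneg (j i)) hρ.le]

lemma exists_mem (hr : 0 < r) {x : Fin n → ℝ} (hx : x ∈ closedBall c r) (m : ℕ) :
    ∃ j : Fin n → ℕ, (∀ i, j i < 2 ^ m) ∧ x ∈ dyadicSub c r m j := by
  have hρ : (0:ℝ) < r / 2 ^ m := by positivity
  have hx' : ∀ i, c i - r ≤ x i ∧ x i ≤ c i + r := by
    rw [closedBall_pi _ hr.le, Set.mem_univ_pi] at hx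
    intro i
    have := hx i
    rwa [Real.closedBall_eq_Icc, Set.mem_Icc] at this
  refine ⟨fun i => min (2 ^ m - 1) ⌊(x i - (c i - r)) / (2 * (r / 2 ^ m))⌋₊,
    fun i => ?_, ?_⟩
  · exact lt_of_le_of_lt (min_le_left _ _) (Nat.sub_lt (pow_pos (by norm_num : (0:ℕ) < 2) m) one_pos)
  · rw [mem_iff hr]
    intro i
    have hs0 : 0 ≤ x i - (c i - r) := by linarith [(hx' i).1]
    have hs2 : x i - (c i - r) ≤ 2 ^ m * (2 * (r / 2 ^ m)) := by
      have h2m : (2:ℝ) ^ m * (r / 2 ^ m) = r := by field_simp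
      have := (hx' i).2
      nlinarith
    by_cases hc : ⌊(x i - (c i - r)) / (2 * (r / 2 ^ m))⌋₊ ≤ 2 ^ m - 1
    · rw [min_eq_right hc]
      have hfl : (⌊(x i - (c i - r)) / (2 * (r / 2 ^ m))⌋₊ : ℝ) ≤ (x i - (c i - r)) / (2 * (r / 2 ^ m)) :=
        Nat.floor_le (by positivity)
      have hfu : (x i - (c i - r)) / (2 * (r / 2 ^ m)) < ⌊(x i - (c i - r)) / (2 * (r / 2 ^ m))⌋₊ + 1 :=
        Nat.lt_floor_add_one _
      have h1 : (⌊(x i - (c i - r)) / (2 * (r / 2 ^ m))⌋₊ : ℝ) * (2 * (r / 2 ^ m)) ≤ x i - (c i - r) :=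
        (le_div_iff₀ (by positivity)).1 hfl
      have h2 : x i - (c i - r) < ((⌊(x i - (c i - r)) / (2 * (r / 2 ^ m))⌋₊ : ℝ) + 1) * (2 * (r / 2 ^ m)) :=
        (div_lt_iff₀ (by positivity)).1 hfu
      constructor <;> nlinarith
    · push_neg at hc
      rw [min_eq_left hc.le]
      have h2 : (2 ^ m : ℕ) ≤ ⌊(x i - (c i - r)) / (2 * (r / 2 ^ m))⌋₊ := by omega
      have h3 : ((2 ^ m : ℕ) : ℝ) ≤ (x i - (c i - r)) / (2 * (r / 2 ^ m)) :=
        (Nat.le_floor_iff (by positivity)).1 h2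
      have h4 : ((2 ^ m : ℕ) : ℝ) * (2 * (r / 2 ^ m)) ≤ x i - (c i - r) :=
        (le_div_iff₀ (by positivity)).1 h3
      have hcast : ((2 ^ m - 1 : ℕ) : ℝ) = (2:ℝ) ^ m - 1 := by
        have h1 : (1:ℕ) ≤ 2 ^ m := Nat.one_le_two_pow
        push_cast [h1]
        ring
      rw [hcast]
      have hcast2 : ((2 ^ m : ℕ) : ℝ) = (2:ℝ) ^ m := by push_cast; ring
      rw [hcast2] at h4
      constructor <;> nlinarith

lemma anc_subset (hr : 0 < r) (m k : ℕ) (j : Fin n → ℕ) :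
    dyadicSub c r (m + k) j ⊆ dyadicSub c r m (fun i => j i / 2 ^ k) := by
  intro x hx
  rw [mem_iff hr] at hx ⊢
  intro i
  obtain ⟨h1, h2⟩ := hx i
  have hq1 : j i / 2 ^ k * 2 ^ k ≤ j i := Nat.div_mul_le_self _ _
  have hq2 : j i < (j i / 2 ^ k) * 2 ^ k + 2 ^ k := Nat.lt_div_mul_add (pow_pos (by norm_num : (0:ℕ) < 2) k)
  have hq1R : ((j i / 2 ^ k : ℕ) : ℝ) * 2 ^ k ≤ (j i : ℝ) := by exact_mod_cast hq1
  have hq2' : j i + 1 ≤ j i / 2 ^ k * 2 ^ k + 2 ^ k := hq2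
  have hq2R : (j i : ℝ) + 1 ≤ ((j i / 2 ^ k : ℕ) : ℝ) * 2 ^ k + 2 ^ k := by exact_mod_cast hq2'
  have hρ' : (0:ℝ) < r / 2 ^ (m + k) := by positivity
  have hrel : (2:ℝ) ^ k * (r / 2 ^ (m + k)) = r / 2 ^ m := by
    rw [pow_add]; field_simp
  have h5 : (2 * ((j i / 2 ^ k : ℕ) : ℝ) + 2) * (r / 2 ^ m) =
      (2 * (((j i / 2 ^ k : ℕ) : ℝ) * 2 ^ k) + 2 * 2 ^ k) * (r / 2 ^ (m + k)) := by
    rw [← hrel]; ring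
  have h6 : (2 * (j i : ℝ) + 2) * (r / 2 ^ (m + k)) ≤
      (2 * (((j i / 2 ^ k : ℕ) : ℝ) * 2 ^ k) + 2 * 2 ^ k) * (r / 2 ^ (m + k)) := by
    apply mul_le_mul_of_nonneg_right _ hρ'.le
    linarith
  have h7 : 2 * (((j i / 2 ^ k : ℕ) : ℝ) * 2 ^ k) * (r / 2 ^ (m + k)) ≤
      2 * (j i : ℝ) * (r / 2 ^ (m + k)) :=
    mul_le_mul_of_nonneg_right (by linarith) hρ'.le
  have h8 : 2 * ((j i / 2 ^ k : ℕ) : ℝ) * (r / 2 ^ m) =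
      2 * (((j i / 2 ^ k : ℕ) : ℝ) * 2 ^ k) * (r / 2 ^ (m + k)) := by
    rw [← hrel]; ring
  constructor
  · linarith
  · linarith

lemma anc_valid {m k : ℕ} {j : Fin n → ℕ} (hj : ∀ i, j i < 2 ^ (m + k)) :
    ∀ i, j i / 2 ^ k < 2 ^ m := by
  intro i
  rw [Nat.div_lt_iff_lt_mul (pow_pos (by norm_num : (0:ℕ) < 2) k)]
  have := hj i
  rwa [pow_add] at this

lemma inter_same (hr : 0 < r) {m : ℕ} {j j' : Fin n → ℕ} (i₀ : Fin n)
    (hne : j i₀ ≠ j' i₀) :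
    volume (dyadicSub c r m j ∩ dyadicSub c r m j') = 0 := by
  have hρ : (0:ℝ) < r / 2 ^ m := by positivity
  rw [dyadicSub, dyadicSub, closedBall_pi _ hρ.le, closedBall_pi _ hρ.le,
    ← Set.pi_inter_distrib, volume_pi_pi]
  apply Finset.prod_eq_zero (Finset.mem_univ i₀)
  rw [Real.closedBall_eq_Icc, Real.closedBall_eq_Icc, Set.Icc_inter_Icc, Real.volume_Icc]
  apply ENNReal.ofReal_eq_zero.2
  have key : (j i₀ : ℝ) * (r / 2 ^ m) + (r / 2 ^ m) ≤ (j' i₀ : ℝ) * (r / 2 ^ m) ∨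
      (j' i₀ : ℝ) * (r / 2 ^ m) + (r / 2 ^ m) ≤ (j i₀ : ℝ) * (r / 2 ^ m) := by
    rcases hne.lt_or_gt with h | h
    · left
      have : (j i₀ : ℝ) + 1 ≤ (j' i₀ : ℝ) := by exact_mod_cast Nat.succ_le_of_lt h
      nlinarith
    · right
      have : (j' i₀ : ℝ) + 1 ≤ (j i₀ : ℝ) := by exact_mod_cast Nat.succ_le_of_lt h
      nlinarith
  have hmin := min_le_left
    (c i₀ - r + (2 * (j i₀ : ℝ) + 1) * (r / 2 ^ m) + r / 2 ^ m)
    (c i₀ - r + (2 * (j' i₀ : ℝ) + 1) * (r / 2 ^ m) + r / 2 ^ m)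
  have hmin' := min_le_right
    (c i₀ - r + (2 * (j i₀ : ℝ) + 1) * (r / 2 ^ m) + r / 2 ^ m)
    (c i₀ - r + (2 * (j' i₀ : ℝ) + 1) * (r / 2 ^ m) + r / 2 ^ m)
  have hmax := le_max_left
    (c i₀ - r + (2 * (j i₀ : ℝ) + 1) * (r / 2 ^ m) - r / 2 ^ m)
    (c i₀ - r + (2 * (j' i₀ : ℝ) + 1) * (r / 2 ^ m) - r / 2 ^ m)
  have hmax' := le_max_right
    (c i₀ - r + (2 * (j i₀ : ℝ) + 1) * (r / 2 ^ m) - r / 2 ^ m)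
    (c i₀ - r + (2 * (j' i₀ : ℝ) + 1) * (r / 2 ^ m) - r / 2 ^ m)
  rcases key with h | h
  · linarith
  · linarith

lemma inter_zero (hr : 0 < r) {m m' : ℕ} (hmm : m ≤ m') {j j' : Fin n → ℕ}
    (i₀ : Fin n) (hne : j' i₀ / 2 ^ (m' - m) ≠ j i₀) :
    volume (dyadicSub c r m j ∩ dyadicSub c r m' j') = 0 := by
  have hsub : dyadicSub c r m' j' ⊆ dyadicSub c r m (fun i => j' i / 2 ^ (m' - m)) := by
    have h := anc_subset (c := c) hr m (m' - m) j'
    rwa [Nat.add_sub_cancel' hmm] at h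
  exact measure_mono_null (Set.inter_subset_inter_right _ hsub)
    (inter_same hr i₀ (Ne.symm hne))

lemma measurable_dyadicMax (v : (Fin n → ℝ) → ℝ≥0∞) :
    Measurable (dyadicMax c r v) := by
  apply Measurable.iSup
  intro m
  apply Measurable.iSup
  intro j
  apply Measurable.iSup
  intro _
  have h : (fun x => ⨆ (_ : x ∈ dyadicSub c r m j),
      (volume (dyadicSub c r m j))⁻¹ * ∫⁻ y in dyadicSub c r m j, v y) =
      (dyadicSub c r m j).indicator (fun _ =>
      (volume (dyadicSub c r m j))⁻¹ * ∫⁻ y in dyadicSub c r m j, v y) := by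
    ext x
    by_cases hx : x ∈ dyadicSub c r m j <;> simp [hx]
  rw [h]
  exact measurable_const.indicator measurableSet_closedBall

lemma le_dyadicMax (hr : 0 < r) {v : (Fin n → ℝ) → ℝ≥0∞} {x : Fin n → ℝ} {m : ℕ}
    {j : Fin n → ℕ} (hj : ∀ i, j i < 2 ^ m) (hx : x ∈ dyadicSub c r m j) :
    (volume (dyadicSub c r m j))⁻¹ * ∫⁻ y in dyadicSub c r m j, v y ≤ dyadicMax c r v x :=
  le_iSup_of_le m (le_iSup_of_le j (le_iSup_of_le hj (le_iSup_of_le hx le_rfl)))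

def bad (c : Fin n → ℝ) (r : ℝ) (g : (Fin n → ℝ) → ℝ≥0∞) (t : ℝ≥0∞)
    (p : ℕ × (Fin n → ℕ)) : Prop :=
  (∀ i, p.2 i < 2 ^ p.1) ∧
    t * volume (dyadicSub c r p.1 p.2) < ∫⁻ y in dyadicSub c r p.1 p.2, g y

def sel (c : Fin n → ℝ) (r : ℝ) (g : (Fin n → ℝ) → ℝ≥0∞) (t : ℝ≥0∞)
    (p : ℕ × (Fin n → ℕ)) : Prop :=
  bad c r g t p ∧ ∀ m'' < p.1, ¬ bad c r g t (m'', fun i => p.2 i / 2 ^ (p.1 - m''))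

lemma dyadicSub_zero (hr : 0 < r) : dyadicSub c r 0 (fun _ => 0) = closedBall c r := by
  unfold dyadicSub
  norm_num

lemma weak_bound (hr : 0 < r) {g : (Fin n → ℝ) → ℝ≥0∞} {t : ℝ≥0∞}
    (hroot : ∫⁻ y in closedBall c r, g y ≤ t * volume (closedBall c r)) :
    ∫⁻ y in closedBall c r ∩ {x | t < dyadicMax c r g x}, g y ≤
      2 ^ n * t * volume (closedBall c r ∩ {x | t < dyadicMax c r g x}) := by
  classical
  have hnotbad0 : ∀ j : Fin n → ℕ, ¬ bad c r g t (0, j) := by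
    rintro j ⟨hv, hlt⟩
    have hj0 : j = fun _ => 0 := funext fun i => Nat.lt_one_iff.1 (by simpa using hv i)
    rw [hj0] at hlt
    simp only [dyadicSub_zero hr] at hlt
    exact absurd hlt (not_lt.2 hroot)
  have hA : ∀ p, bad c r g t p → ∃ q, sel c r g t q ∧
      dyadicSub c r p.1 p.2 ⊆ dyadicSub c r q.1 q.2 := by
    rintro ⟨m, j⟩ hp
    have heta : (fun i => j i / 2 ^ (m - m)) = j := by
      funext i; simp
    have hex : ∃ m'', bad c r g t (m'', fun i => j i / 2 ^ (m - m'')) :=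
      ⟨m, by rw [heta]; exact hp⟩
    have hm₀ := Nat.find_spec hex
    have hm₀le : Nat.find hex ≤ m := Nat.find_le (by rw [heta]; exact hp)
    refine ⟨(Nat.find hex, fun i => j i / 2 ^ (m - Nat.find hex)), ⟨hm₀, ?_⟩, ?_⟩
    · intro m'' hm''
      have hfun : (fun i => j i / 2 ^ (m - Nat.find hex) / 2 ^ (Nat.find hex - m'')) =
          fun i => j i / 2 ^ (m - m'') := by
        funext i
        rw [Nat.div_div_eq_div_mul, ← pow_add]
        congr 2
        omega
      show ¬ bad c r g t (m'', fun i => j i / 2 ^ (m - Nat.find hex) / 2 ^ (Nat.find hex - m''))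
      rw [hfun]
      exact Nat.find_min hex hm''
    · have h := anc_subset (c := c) hr (Nat.find hex) (m - Nat.find hex) j
      rwa [Nat.add_sub_cancel' hm₀le] at h
  have hsel_bound : ∀ p, sel c r g t p →
      ∫⁻ y in dyadicSub c r p.1 p.2, g y ≤ 2 ^ n * t * volume (dyadicSub c r p.1 p.2) := by
    rintro ⟨m, j⟩ hp
    match m, hp with
    | 0, hp => exact absurd hp.1 (hnotbad0 j)
    | m' + 1, hp => ?_
    have hfun : (fun i => j i / 2 ^ (m' + 1 - m')) = fun i => j i / 2 := by
      funext i
      norm_num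
    have hpar_notbad : ¬ bad c r g t (m', fun i => j i / 2) := by
      have h := hp.2 m' (Nat.lt_succ_self m')
      rwa [hfun] at h
    have hparvalid : ∀ i, j i / 2 < 2 ^ m' := by
      intro i
      rw [Nat.div_lt_iff_lt_mul (by norm_num : 0 < 2)]
      have h2 := hp.1.1 i
      rwa [pow_succ] at h2
    have hpar_le : ∫⁻ y in dyadicSub c r m' (fun i => j i / 2), g y ≤
        t * volume (dyadicSub c r m' (fun i => j i / 2)) := by
      by_contra hcon
      push_neg at hcon
      exact hpar_notbad ⟨hparvalid, hcon⟩
    have hsub : dyadicSub c r (m' + 1) j ⊆ dyadicSub c r m' (fun i => j i / 2) := by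
      have h := anc_subset (c := c) hr m' 1 j
      simpa using h
    have hvol : volume (dyadicSub c r m' (fun i => j i / 2)) =
        2 ^ n * volume (dyadicSub c r (m' + 1) j) := by
      rw [volume_eq hr, volume_eq hr]
      have h1 : (2 * (r / 2 ^ m')) ^ n = 2 ^ n * (2 * (r / 2 ^ (m' + 1))) ^ n := by
        rw [← mul_pow]
        congr 1
        rw [pow_succ]
        field_simp
      rw [h1, ENNReal.ofReal_mul (by positivity)]
      congr 1
      rw [ENNReal.ofReal_pow (by norm_num : (0:ℝ) ≤ 2)]
      norm_num
    calc ∫⁻ y in dyadicSub c r (m' + 1) j, g y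
        ≤ ∫⁻ y in dyadicSub c r m' (fun i => j i / 2), g y := lintegral_mono_set hsub
      _ ≤ t * volume (dyadicSub c r m' (fun i => j i / 2)) := hpar_le
      _ = t * (2 ^ n * volume (dyadicSub c r (m' + 1) j)) := by rw [hvol]
      _ = 2 ^ n * t * volume (dyadicSub c r (m' + 1) j) := by ring
  have hdisj : ∀ p q, sel c r g t p → sel c r g t q → p ≠ q →
      volume (dyadicSub c r p.1 p.2 ∩ dyadicSub c r q.1 q.2) = 0 := by
    have key : ∀ p q, sel c r g t p → sel c r g t q → p ≠ q → p.1 ≤ q.1 →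
        volume (dyadicSub c r p.1 p.2 ∩ dyadicSub c r q.1 q.2) = 0 := by
      rintro ⟨m, j⟩ ⟨m', j'⟩ hp hq hne hle
      by_cases hex : ∃ i, j' i / 2 ^ (m' - m) ≠ j i
      · obtain ⟨i₀, hi₀⟩ := hex
        exact inter_zero hr hle i₀ hi₀
      · push_neg at hex
        exfalso
        rcases eq_or_lt_of_le hle with heq | hlt
        · apply hne
          simp only at heq
          subst heq
          have hjj : j' = j := by
            funext i
            have h := hex i
            simpa using h
          rw [hjj]
        · have h := hq.2 m hlt
          have hfun : (fun i => j' i / 2 ^ (m' - m)) = j := funext hex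
          rw [hfun] at h
          exact h hp.1
    intro p q hp hq hne
    rcases le_total p.1 q.1 with h | h
    · exact key p q hp hq hne h
    · rw [Set.inter_comm]
      exact key q p hq hp hne.symm h
  have hbad_mem : ∀ p, bad c r g t p → ∀ x ∈ dyadicSub c r p.1 p.2,
      x ∈ closedBall c r ∩ {x | t < dyadicMax c r g x} := by
    rintro ⟨m, j⟩ hp x hx
    refine ⟨subset_Q hr hp.1 hx, ?_⟩
    have h1 : t < (volume (dyadicSub c r m j))⁻¹ * ∫⁻ y in dyadicSub c r m j, g y := by
      rw [← ENNReal.div_eq_inv_mul]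
      exact (ENNReal.lt_div_iff_mul_lt (Or.inl (volume_ne_zero hr m j))
        (Or.inl (volume_ne_top hr m j))).2 hp.2
    exact h1.trans_le (le_dyadicMax hr hp.1 hx)
  have hE_bad : ∀ x ∈ closedBall c r ∩ {x | t < dyadicMax c r g x},
      ∃ p, bad c r g t p ∧ x ∈ dyadicSub c r p.1 p.2 := by
    rintro x ⟨hxQ, hxM⟩
    have hxM' : t < dyadicMax c r g x := hxM
    rw [dyadicMax] at hxM'
    obtain ⟨m, hm⟩ := lt_iSup_iff.1 hxM'
    obtain ⟨j, hj⟩ := lt_iSup_iff.1 hm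
    obtain ⟨hval, hj2⟩ := lt_iSup_iff.1 hj
    obtain ⟨hmem, hlt⟩ := lt_iSup_iff.1 hj2
    refine ⟨(m, j), ⟨hval, ?_⟩, hmem⟩
    rw [← ENNReal.div_eq_inv_mul] at hlt
    exact (ENNReal.lt_div_iff_mul_lt (Or.inl (volume_ne_zero hr m j))
      (Or.inl (volume_ne_top hr m j))).1 hlt
  have hEsub : closedBall c r ∩ {x | t < dyadicMax c r g x} ⊆
      ⋃ (q : {p // sel c r g t p}), dyadicSub c r q.1.1 q.1.2 := by
    intro x hx
    obtain ⟨p, hbadp, hxp⟩ := hE_bad x hx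
    obtain ⟨q, hselq, hsub⟩ := hA p hbadp
    exact Set.mem_iUnion.2 ⟨⟨q, hselq⟩, hsub hxp⟩
  have hUsub : (⋃ (q : {p // sel c r g t p}), dyadicSub c r q.1.1 q.1.2) ⊆
      closedBall c r ∩ {x | t < dyadicMax c r g x} :=
    Set.iUnion_subset fun q => fun x hx => hbad_mem q.1 q.2.1 x hx
  calc ∫⁻ y in closedBall c r ∩ {x | t < dyadicMax c r g x}, g y
      ≤ ∫⁻ y in ⋃ (q : {p // sel c r g t p}), dyadicSub c r q.1.1 q.1.2, g y :=
        lintegral_mono_set hEsub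
    _ ≤ ∑' (q : {p // sel c r g t p}), ∫⁻ y in dyadicSub c r q.1.1 q.1.2, g y :=
        lintegral_iUnion_le _ _
    _ ≤ ∑' (q : {p // sel c r g t p}), 2 ^ n * t * volume (dyadicSub c r q.1.1 q.1.2) :=
        ENNReal.tsum_le_tsum fun q => hsel_bound q.1 q.2
    _ = 2 ^ n * t * ∑' (q : {p // sel c r g t p}), volume (dyadicSub c r q.1.1 q.1.2) :=
        ENNReal.tsum_mul_left
    _ = 2 ^ n * t * volume (⋃ (q : {p // sel c r g t p}), dyadicSub c r q.1.1 q.1.2) := by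
        congr 1
        refine (measure_iUnion₀ ?_ (fun q => measurableSet_closedBall.nullMeasurableSet)).symm
        intro q q' hne
        exact hdisj q.1 q'.1 q.2 q'.2 (Subtype.coe_ne_coe.2 hne)
    _ ≤ 2 ^ n * t * volume (closedBall c r ∩ {x | t < dyadicMax c r g x}) :=
        _root_.mul_le_mul_right (measure_mono hUsub) _

lemma ae_le_dyadicMax (hr : 0 < r) {g : (Fin n → ℝ) → ℝ≥0∞} (hg : Measurable g)
    (hfin : ∫⁻ y in closedBall c r, g y ≠ ⊤) :
    ∀ᵐ x ∂(volume : Measure (Fin n → ℝ)),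
      x ∈ closedBall c r → g x ≤ dyadicMax c r g x := by
  have hcoe : ((6 ^ n : ℝ≥0) : ℝ≥0∞) = ENNReal.ofReal ((6:ℝ) ^ n) := by
    rw [ENNReal.ofReal_pow (by norm_num : (0:ℝ) ≤ 6)]
    norm_num
  have hdb : ∀ x : Fin n → ℝ, ∃ᶠ s in 𝓝[>] (0:ℝ),
      volume (closedBall x (3 * s)) ≤ ((6 ^ n : ℝ≥0) : ℝ≥0∞) * volume (closedBall x s) := by
    intro x
    refine Filter.Eventually.frequently ?_
    filter_upwards [self_mem_nhdsWithin] with s hs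
    have hs' : (0:ℝ) < s := hs
    rw [Real.volume_pi_closedBall _ (by positivity), Real.volume_pi_closedBall _ hs'.le,
      Fintype.card_fin, hcoe, ← ENNReal.ofReal_mul (by positivity)]
    apply ENNReal.ofReal_le_ofReal
    have h1 : (2 * (3 * s)) ^ n ≤ (6 * (2 * s)) ^ n := by
      apply pow_le_pow_left₀ (by positivity)
      linarith
    calc (2 * (3 * s)) ^ n ≤ (6 * (2 * s)) ^ n := h1
      _ = 6 ^ n * (2 * s) ^ n := mul_pow 6 (2 * s) n
  set v := Vitali.vitaliFamily (volume : Measure (Fin n → ℝ)) (6 ^ n) hdb with hv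
  have hind : Measurable ((closedBall c r).indicator g) :=
    hg.indicator measurableSet_closedBall
  have hint : ∫⁻ y, (closedBall c r).indicator g y ≠ ⊤ := by
    rw [lintegral_indicator measurableSet_closedBall]
    exact hfin
  filter_upwards [v.ae_tendsto_lintegral_div hind.aemeasurable hint] with x hx hxQ
  apply le_of_forall_lt
  intro b hb
  have hb' : b < (closedBall c r).indicator g x := by
    rwa [Set.indicator_of_mem hxQ]
  have hev := hx.eventually (isOpen_Ioi.eventually_mem hb')
  rw [VitaliFamily.eventually_filterAt_iff] at hev
  obtain ⟨ε, hε, hP⟩ := hev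
  obtain ⟨m, hm⟩ : ∃ m : ℕ, 2 * (r / 2 ^ m) ≤ ε := by
    obtain ⟨m, hm⟩ := exists_pow_lt_of_lt_one
      (show (0:ℝ) < ε / (2 * r) by positivity) (show (1/2:ℝ) < 1 by norm_num)
    refine ⟨m, ?_⟩
    have h12 : (1/2:ℝ) ^ m = 1 / 2 ^ m := by rw [div_pow, one_pow]
    rw [h12] at hm
    have h2r : (0:ℝ) < 2 * r := by linarith
    have := mul_lt_mul_of_pos_left hm h2r
    have heq : 2 * r * (1 / 2 ^ m) = 2 * (r / 2 ^ m) := by field_simp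
    have heq2 : 2 * r * (ε / (2 * r)) = ε := by field_simp
    rw [heq, heq2] at this
    exact this.le
  obtain ⟨j, hjval, hxj⟩ := exists_mem hr hxQ m
  have hρ : (0:ℝ) < r / 2 ^ m := by positivity
  have hsubx : dyadicSub c r m j ⊆ closedBall x (2 * (r / 2 ^ m)) := by
    intro y hy
    rw [mem_closedBall]
    have h1 : dist y (fun i => c i - r + (2 * (j i : ℝ) + 1) * (r / 2 ^ m)) ≤ r / 2 ^ m :=
      mem_closedBall.1 hy
    have h2 : dist x (fun i => c i - r + (2 * (j i : ℝ) + 1) * (r / 2 ^ m)) ≤ r / 2 ^ m :=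
      mem_closedBall.1 hxj
    calc dist y x ≤ dist y (fun i => c i - r + (2 * (j i : ℝ) + 1) * (r / 2 ^ m)) +
        dist (fun i => c i - r + (2 * (j i : ℝ) + 1) * (r / 2 ^ m)) x := dist_triangle _ _ _
      _ ≤ r / 2 ^ m + r / 2 ^ m := by
          rw [dist_comm (fun i => c i - r + (2 * (j i : ℝ) + 1) * (r / 2 ^ m)) x]
          exact add_le_add h1 h2
      _ = 2 * (r / 2 ^ m) := by ring
  have hsets : dyadicSub c r m j ∈ v.setsAt x := by
    refine ⟨?_, ?_, 2 * (r / 2 ^ m), hsubx, ?_⟩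
    · exact isClosed_closedBall
    · exact (nonempty_ball.2 hρ).mono ball_subset_interior_closedBall
    · rw [volume_eq hr, Real.volume_pi_closedBall _ (by positivity), Fintype.card_fin, hcoe,
        ← ENNReal.ofReal_mul (by positivity)]
      apply ENNReal.ofReal_le_ofReal
      have h1 : 2 * (3 * (2 * (r / 2 ^ m))) = 6 * (2 * (r / 2 ^ m)) := by ring
      rw [h1, mul_pow]
  have hkey := hP _ hsets (hsubx.trans (closedBall_subset_closedBall hm))
  have hDQ : dyadicSub c r m j ⊆ closedBall c r := subset_Q hr hjval
  have hieq : ∫⁻ y in dyadicSub c r m j, (closedBall c r).indicator g y =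
      ∫⁻ y in dyadicSub c r m j, g y :=
    setLIntegral_congr_fun measurableSet_closedBall
      (fun y hy => Set.indicator_of_mem (hDQ hy) g)
  have hkey' : b < (volume (dyadicSub c r m j))⁻¹ * ∫⁻ y in dyadicSub c r m j, g y := by
    rw [← ENNReal.div_eq_inv_mul, ← hieq]
    exact hkey
  exact hkey'.trans_le (le_dyadicMax hr hjval hxj)

lemma K_int {p : ℝ} (hp : 0 < p) {b : ℝ} (hb : 0 ≤ b) :
    ∫⁻ t in Set.Ioc (0:ℝ) b, ENNReal.ofReal (p * t ^ (p - 1)) = ENNReal.ofReal (b ^ p) := by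
  have hint : IntegrableOn (fun t : ℝ => p * t ^ (p - 1)) (Set.Ioc 0 b) := by
    have h1 : IntervalIntegrable (fun t : ℝ => t ^ (p - 1)) volume 0 b :=
      intervalIntegral.intervalIntegrable_rpow' (by linarith)
    have h2 : IntervalIntegrable (fun t : ℝ => p * t ^ (p - 1)) volume 0 b := h1.const_mul p
    exact (intervalIntegrable_iff_integrableOn_Ioc_of_le hb).1 h2
  rw [← MeasureTheory.ofReal_integral_eq_lintegral_ofReal hint
    ((ae_restrict_mem measurableSet_Ioc).mono fun t ht =>
      mul_nonneg hp.le (Real.rpow_nonneg ht.1.le _))]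
  congr 1
  rw [← intervalIntegral.integral_of_le hb, intervalIntegral.integral_const_mul,
    integral_rpow (Or.inl (by linarith))]
  have hpe : p - 1 + 1 = p := by ring
  rw [Real.zero_rpow (by rw [hpe]; exact hp.ne'), hpe, sub_zero]
  field_simp

lemma pointwise_rpow {p : ℝ} (hp : 0 < p) (a : ℝ≥0∞) :
    ∫⁻ t in Set.Ioi (0:ℝ),
      (if ENNReal.ofReal t < a then ENNReal.ofReal (p * t ^ (p - 1)) else 0) = a ^ p := by
  rcases eq_or_ne a ⊤ with rfl | ha
  · simp only [ENNReal.ofReal_lt_top, if_true]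
    rw [ENNReal.top_rpow_of_pos hp]
    by_contra hne
    have hbig : ∀ k : ℕ, ENNReal.ofReal ((k:ℝ) ^ p) ≤
        ∫⁻ t in Set.Ioi (0:ℝ), ENNReal.ofReal (p * t ^ (p - 1)) := fun k => by
      rw [← K_int hp (Nat.cast_nonneg k)]
      exact lintegral_mono_set Set.Ioc_subset_Ioi_self
    obtain ⟨y, hy1, hy0⟩ := ((_root_.tendsto_rpow_atTop hp).eventually_ge_atTop
      ((∫⁻ t in Set.Ioi (0:ℝ), ENNReal.ofReal (p * t ^ (p - 1))).toReal + 1)).and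
      (eventually_ge_atTop (0:ℝ)) |>.exists
    have hky : (⌈y⌉₊ : ℝ) ^ p ≥ y ^ p :=
      Real.rpow_le_rpow hy0 (Nat.le_ceil y) hp.le
    have hlt : ∫⁻ t in Set.Ioi (0:ℝ), ENNReal.ofReal (p * t ^ (p - 1)) <
        ENNReal.ofReal ((⌈y⌉₊ : ℝ) ^ p) := by
      rw [ENNReal.lt_ofReal_iff_toReal_lt hne]
      linarith
    exact absurd (hbig ⌈y⌉₊) (not_le.2 hlt)
  · rcases eq_or_ne a 0 with rfl | ha0
    · simp [ENNReal.not_lt_zero, ENNReal.zero_rpow_of_pos hp]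
    · have hA : 0 < a.toReal := ENNReal.toReal_pos ha0 ha
      have hcong : ∀ t ∈ Set.Ioi (0:ℝ),
          (if ENNReal.ofReal t < a then ENNReal.ofReal (p * t ^ (p - 1)) else 0) =
          (Set.Ioo (0:ℝ) a.toReal).indicator (fun t => ENNReal.ofReal (p * t ^ (p - 1))) t := by
        intro t ht
        have hiff : ENNReal.ofReal t < a ↔ t < a.toReal :=
          ENNReal.ofReal_lt_iff_lt_toReal (le_of_lt ht) ha
        by_cases h : t < a.toReal
        · rw [if_pos (hiff.2 h), Set.indicator_of_mem (Set.mem_Ioo.2 ⟨ht, h⟩)]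
        · rw [if_neg (fun hc => h (hiff.1 hc)),
            Set.indicator_of_notMem (fun hc => h (Set.mem_Ioo.1 hc).2)]
      rw [setLIntegral_congr_fun measurableSet_Ioi hcong,
        lintegral_indicator measurableSet_Ioo, Measure.restrict_restrict measurableSet_Ioo,
        Set.inter_eq_self_of_subset_left Set.Ioo_subset_Ioi_self,
        Measure.restrict_congr_set Ioo_ae_eq_Ioc, K_int hp hA.le,
        ← ENNReal.ofReal_rpow_of_pos hA, ENNReal.ofReal_toReal ha]

lemma layercake {X : Type*} [MeasurableSpace X] (μ : Measure X) [SigmaFinite μ]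
    {F : X → ℝ≥0∞} (hF : Measurable F) {p : ℝ} (hp : 0 < p) :
    ∫⁻ x, F x ^ p ∂μ = ∫⁻ t in Set.Ioi (0:ℝ),
      ENNReal.ofReal (p * t ^ (p - 1)) * μ {x | ENNReal.ofReal t < F x} := by
  have h1 : ∀ x, F x ^ p = ∫⁻ t in Set.Ioi (0:ℝ),
      (if ENNReal.ofReal t < F x then ENNReal.ofReal (p * t ^ (p - 1)) else 0) :=
    fun x => (pointwise_rpow hp (F x)).symm
  rw [lintegral_congr h1, lintegral_lintegral_swap]
  · refine lintegral_congr fun t => ?_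
    have h2 : (fun x => if ENNReal.ofReal t < F x then ENNReal.ofReal (p * t ^ (p - 1)) else 0) =
        {x | ENNReal.ofReal t < F x}.indicator (fun _ => ENNReal.ofReal (p * t ^ (p - 1))) := by
      ext x
      by_cases h : ENNReal.ofReal t < F x <;> simp [h, Set.indicator_apply]
    rw [h2, lintegral_indicator_const (measurableSet_lt measurable_const hF)]
  · apply Measurable.aemeasurable
    have hS : MeasurableSet {q : X × ℝ | ENNReal.ofReal q.2 < F q.1} :=
      measurableSet_lt (ENNReal.measurable_ofReal.comp measurable_snd)
        (hF.comp measurable_fst)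
    exact Measurable.ite hS
      (ENNReal.measurable_ofReal.comp
        (((measurable_snd.pow measurable_const)).const_mul p))
      measurable_const

lemma measurable_weight {p : ℝ} : Measurable fun t : ℝ => ENNReal.ofReal (p * t ^ (p - 1)) :=
  ENNReal.measurable_ofReal.comp ((measurable_id.pow measurable_const).const_mul p)

lemma measurable_distrib {X : Type*} [MeasurableSpace X] (μ : Measure X)
    (F : X → ℝ≥0∞) : Measurable fun t : ℝ => μ {x | ENNReal.ofReal t < F x} := by
  apply Antitone.measurable
  intro t1 t2 h12
  exact measure_mono fun x hx => (ENNReal.ofReal_le_ofReal h12).trans_lt hx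

end St16

/-- **Dyadic local estimate.** For any weight `w`, cube `Q` and `δ > 0`:
`⨍_Q w^(1+δ) ≤ (⨍_Q w)^(1+δ) + 2ⁿ (δ/(δ+1)) ⨍_Q (M_{d,Q} w)^(1+δ)`. -/
theorem statement16 (n : ℕ) (hn : 1 ≤ n)
    (w : (Fin n → ℝ) → ℝ) (hw : ∀ x, 0 ≤ w x) (hloc : LocallyIntegrable w volume)
    (c : Fin n → ℝ) (r : ℝ) (hr : 0 < r) (δ : ℝ) (hδ : 0 < δ) :
    (volume (closedBall c r))⁻¹ *
        ∫⁻ x in closedBall c r, ENNReal.ofReal (w x) ^ (1 + δ) ≤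
      ((volume (closedBall c r))⁻¹ * ∫⁻ x in closedBall c r, ENNReal.ofReal (w x)) ^
          (1 + δ) +
        (2 : ℝ≥0∞) ^ n * ENNReal.ofReal (δ / (δ + 1)) *
          ((volume (closedBall c r))⁻¹ *
            ∫⁻ x in closedBall c r,
              (dyadicMax c r (fun y => ENNReal.ofReal (w y)) x) ^ (1 + δ)) := by
  classical
  have hδ1 : (0:ℝ) < 1 + δ := by linarith
  set Q := closedBall c r with hQdef
  have hvolQ : volume Q = ENNReal.ofReal ((2 * r) ^ n) := by
    rw [hQdef, Real.volume_pi_closedBall _ hr.le, Fintype.card_fin]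
  have hvol0 : volume Q ≠ 0 := by
    rw [hvolQ]
    have : (0:ℝ) < (2 * r) ^ n := by positivity
    simp [ENNReal.ofReal_eq_zero, not_le, this]
  have hvolT : volume Q ≠ ⊤ := by rw [hvolQ]; exact ENNReal.ofReal_ne_top
  -- measurable version of the weight
  have haem : AEMeasurable (fun x => ENNReal.ofReal (w x)) (volume : Measure (Fin n → ℝ)) :=
    hloc.aestronglyMeasurable.aemeasurable.ennreal_ofReal
  set g : (Fin n → ℝ) → ℝ≥0∞ := haem.mk _ with hgdef
  have hg : Measurable g := haem.measurable_mk
  have hgae : (fun x => ENNReal.ofReal (w x)) =ᵐ[(volume : Measure (Fin n → ℝ))] g :=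
    haem.ae_eq_mk
  have hWint : ∫⁻ x in Q, ENNReal.ofReal (w x) ≠ ⊤ := by
    have hInt : IntegrableOn w Q volume := hloc.integrableOn_isCompact (isCompact_closedBall c r)
    exact ne_of_lt (lt_of_le_of_lt
      (lintegral_mono fun x => Real.ofReal_le_enorm (w x)) hInt.2)
  have hgQae : (fun x => ENNReal.ofReal (w x)) =ᵐ[volume.restrict Q] g := ae_restrict_of_ae hgae
  have hint2 : ∫⁻ x in Q, ENNReal.ofReal (w x) = ∫⁻ x in Q, g x := lintegral_congr_ae hgQae
  have hgint : ∫⁻ x in Q, g x ≠ ⊤ := by rwa [← hint2]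
  have hMeq : dyadicMax c r (fun y => ENNReal.ofReal (w y)) = dyadicMax c r g := by
    funext x
    unfold dyadicMax
    refine iSup_congr fun m => iSup_congr fun j => iSup_congr fun _ => iSup_congr fun _ => ?_
    congr 1
    exact lintegral_congr_ae (ae_restrict_of_ae hgae)
  set M := dyadicMax c r g with hMdef
  have hM : Measurable M := St16.measurable_dyadicMax g
  have hint1 : ∫⁻ x in Q, ENNReal.ofReal (w x) ^ (1 + δ) = ∫⁻ x in Q, g x ^ (1 + δ) :=
    lintegral_congr_ae (hgQae.mono fun x hx => by simp only [] at hx ⊢; rw [hx])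
  rw [hint1, hint2, hMeq]
  set A := (volume Q)⁻¹ * ∫⁻ x in Q, g x with hAdef
  have hAne : A ≠ ⊤ := ENNReal.mul_ne_top (ENNReal.inv_ne_top.2 hvol0) hgint
  have hQA : ∫⁻ x in Q, g x = A * volume Q := by
    rw [hAdef, mul_comm ((volume Q)⁻¹) _, mul_assoc, ENNReal.inv_mul_cancel hvol0 hvolT, mul_one]
  set ν := (volume : Measure (Fin n → ℝ)).restrict Q with hν
  set μw := ν.withDensity g with hμw
  haveI hfinμw : IsFiniteMeasure μw := isFiniteMeasure_withDensity hgint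
  have stepA : ∫⁻ x in Q, g x ^ (1 + δ) = ∫⁻ x, g x ^ δ ∂μw := by
    rw [hμw, lintegral_withDensity_eq_lintegral_mul ν hg (hg.pow measurable_const)]
    refine lintegral_congr fun x => ?_
    simp only [Pi.mul_apply]
    rw [ENNReal.rpow_add_of_nonneg 1 δ zero_le_one hδ.le, ENNReal.rpow_one]
  have haeleQ : ∀ᵐ x ∂ν, g x ≤ M x := by
    have h7 := St16.ae_le_dyadicMax hr hg hgint
    have h8 : ∀ᵐ x ∂ν, x ∈ Q := ae_restrict_mem measurableSet_closedBall
    filter_upwards [ae_restrict_of_ae h7, h8] with x hx hxQ using hx hxQ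
  have stepB : ∫⁻ x, g x ^ δ ∂μw ≤ ∫⁻ x, M x ^ δ ∂μw := by
    apply lintegral_mono_ae
    filter_upwards [haeleQ.filter_mono (withDensity_absolutelyContinuous ν g).ae_le] with x hx
    exact ENNReal.rpow_le_rpow hx hδ.le
  have stepC : ∫⁻ x, M x ^ δ ∂μw = ∫⁻ t in Set.Ioi (0:ℝ),
      ENNReal.ofReal (δ * t ^ (δ - 1)) * μw {x | ENNReal.ofReal t < M x} :=
    St16.layercake μw hM hδ
  have hlayer2 : ∫⁻ x, M x ^ (1 + δ) ∂ν = ∫⁻ t in Set.Ioi (0:ℝ),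
      ENNReal.ofReal ((1 + δ) * t ^ (1 + δ - 1)) * ν {x | ENNReal.ofReal t < M x} :=
    St16.layercake ν hM hδ1
  set T := A.toReal with hT
  have hT0 : 0 ≤ T := ENNReal.toReal_nonneg
  have hsplit : Set.Ioi (0:ℝ) = Set.Ioc 0 T ∪ Set.Ioi T := (Set.Ioc_union_Ioi_eq_Ioi hT0).symm
  have hμwuniv : ∀ S : Set (Fin n → ℝ), μw S ≤ A * volume Q := by
    intro S
    refine (measure_mono (Set.subset_univ _)).trans ?_
    rw [hμw, withDensity_apply _ MeasurableSet.univ, Measure.restrict_univ, ← hQA]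
  have hP1 : ∫⁻ t in Set.Ioc (0:ℝ) T,
      ENNReal.ofReal (δ * t ^ (δ - 1)) * μw {x | ENNReal.ofReal t < M x} ≤
      A ^ (1 + δ) * volume Q := by
    calc ∫⁻ t in Set.Ioc (0:ℝ) T,
        ENNReal.ofReal (δ * t ^ (δ - 1)) * μw {x | ENNReal.ofReal t < M x}
        ≤ ∫⁻ t in Set.Ioc (0:ℝ) T, ENNReal.ofReal (δ * t ^ (δ - 1)) * (A * volume Q) :=
          lintegral_mono fun t => _root_.mul_le_mul_right (hμwuniv _) _
      _ = (∫⁻ t in Set.Ioc (0:ℝ) T, ENNReal.ofReal (δ * t ^ (δ - 1))) * (A * volume Q) :=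
          lintegral_mul_const _ St16.measurable_weight
      _ = ENNReal.ofReal (T ^ δ) * (A * volume Q) := by rw [St16.K_int hδ hT0]
      _ = A ^ δ * (A * volume Q) := by
          rw [hT, ENNReal.toReal_rpow,
            ENNReal.ofReal_toReal (ENNReal.rpow_ne_top_of_nonneg hδ.le hAne)]
      _ = A ^ (1 + δ) * volume Q := by
          rw [← mul_assoc]
          congr 1
          rw [ENNReal.rpow_add_of_nonneg 1 δ zero_le_one hδ.le, ENNReal.rpow_one, mul_comm]
  have hP2 : ∫⁻ t in Set.Ioi T,
      ENNReal.ofReal (δ * t ^ (δ - 1)) * μw {x | ENNReal.ofReal t < M x} ≤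
      2 ^ n * ENNReal.ofReal (δ / (δ + 1)) * ∫⁻ x, M x ^ (1 + δ) ∂ν := by
    have hpt : ∀ t ∈ Set.Ioi T,
        ENNReal.ofReal (δ * t ^ (δ - 1)) * μw {x | ENNReal.ofReal t < M x} ≤
        2 ^ n * ENNReal.ofReal (δ / (δ + 1)) *
          (ENNReal.ofReal ((1 + δ) * t ^ (1 + δ - 1)) * ν {x | ENNReal.ofReal t < M x}) := by
      intro t ht
      have ht0 : 0 < t := lt_of_le_of_lt hT0 ht
      have hSm : MeasurableSet {x | ENNReal.ofReal t < M x} :=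
        measurableSet_lt measurable_const hM
      have hμwS : μw {x | ENNReal.ofReal t < M x} =
          ∫⁻ y in Q ∩ {x | ENNReal.ofReal t < M x}, g y := by
        rw [hμw, withDensity_apply _ hSm, hν, Measure.restrict_restrict hSm, Set.inter_comm]
      have hroot : ∫⁻ y in Q, g y ≤ ENNReal.ofReal t * volume Q := by
        rw [hQA]
        apply _root_.mul_le_mul_left
        rw [← ENNReal.ofReal_toReal hAne]
        exact ENNReal.ofReal_le_ofReal (le_of_lt ht)
      have hweak := St16.weak_bound hr hroot (g := g) (t := ENNReal.ofReal t)
      rw [← hMdef] at hweak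
      have hνS : volume (Q ∩ {x | ENNReal.ofReal t < M x}) =
          ν {x | ENNReal.ofReal t < M x} := by
        rw [hν, Measure.restrict_apply hSm, Set.inter_comm]
      rw [hμwS]
      have hr1 : δ * t ^ (δ - 1) * t = δ * t ^ δ := by
        rw [mul_assoc, ← Real.rpow_add_one ht0.ne' (δ - 1), sub_add_cancel]
      have hr2 : δ / (δ + 1) * ((1 + δ) * t ^ (1 + δ - 1)) = δ * t ^ δ := by
        have h3 : 1 + δ - 1 = δ := by ring
        rw [h3]
        field_simp
        ring
      calc ENNReal.ofReal (δ * t ^ (δ - 1)) * ∫⁻ y in Q ∩ {x | ENNReal.ofReal t < M x}, g y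
          ≤ ENNReal.ofReal (δ * t ^ (δ - 1)) *
            (2 ^ n * ENNReal.ofReal t * volume (Q ∩ {x | ENNReal.ofReal t < M x})) :=
            _root_.mul_le_mul_right hweak _
        _ = 2 ^ n * (ENNReal.ofReal (δ * t ^ (δ - 1)) * ENNReal.ofReal t) *
            volume (Q ∩ {x | ENNReal.ofReal t < M x}) := by ring
        _ = 2 ^ n * ENNReal.ofReal (δ * t ^ δ) *
            volume (Q ∩ {x | ENNReal.ofReal t < M x}) := by
            rw [← ENNReal.ofReal_mul (by positivity), hr1]
        _ = 2 ^ n * (ENNReal.ofReal (δ / (δ + 1)) * ENNReal.ofReal ((1 + δ) * t ^ (1 + δ - 1))) *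
            volume (Q ∩ {x | ENNReal.ofReal t < M x}) := by
            rw [← ENNReal.ofReal_mul (by positivity), hr2]
        _ = 2 ^ n * ENNReal.ofReal (δ / (δ + 1)) *
            (ENNReal.ofReal ((1 + δ) * t ^ (1 + δ - 1)) * ν {x | ENNReal.ofReal t < M x}) := by
            rw [← hνS]
            ring
    calc ∫⁻ t in Set.Ioi T,
        ENNReal.ofReal (δ * t ^ (δ - 1)) * μw {x | ENNReal.ofReal t < M x}
        ≤ ∫⁻ t in Set.Ioi T, 2 ^ n * ENNReal.ofReal (δ / (δ + 1)) *
          (ENNReal.ofReal ((1 + δ) * t ^ (1 + δ - 1)) * ν {x | ENNReal.ofReal t < M x}) :=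
          setLIntegral_mono
            ((measurable_const).mul (St16.measurable_weight.mul (St16.measurable_distrib ν M)))
            hpt
      _ ≤ ∫⁻ t in Set.Ioi (0:ℝ), 2 ^ n * ENNReal.ofReal (δ / (δ + 1)) *
          (ENNReal.ofReal ((1 + δ) * t ^ (1 + δ - 1)) * ν {x | ENNReal.ofReal t < M x}) :=
          lintegral_mono_set (Set.Ioi_subset_Ioi hT0)
      _ = 2 ^ n * ENNReal.ofReal (δ / (δ + 1)) * ∫⁻ t in Set.Ioi (0:ℝ),
          ENNReal.ofReal ((1 + δ) * t ^ (1 + δ - 1)) * ν {x | ENNReal.ofReal t < M x} :=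
          lintegral_const_mul _ (St16.measurable_weight.mul (St16.measurable_distrib ν M))
      _ = 2 ^ n * ENNReal.ofReal (δ / (δ + 1)) * ∫⁻ x, M x ^ (1 + δ) ∂ν := by rw [← hlayer2]
  have hmain : ∫⁻ x in Q, g x ^ (1 + δ) ≤
      A ^ (1 + δ) * volume Q +
        2 ^ n * ENNReal.ofReal (δ / (δ + 1)) * ∫⁻ x, M x ^ (1 + δ) ∂ν := by
    rw [stepA]
    refine stepB.trans ?_
    rw [stepC, hsplit, lintegral_union measurableSet_Ioi (Set.Ioc_disjoint_Ioi le_rfl)]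
    exact add_le_add hP1 hP2
  calc (volume Q)⁻¹ * ∫⁻ x in Q, g x ^ (1 + δ)
      ≤ (volume Q)⁻¹ * (A ^ (1 + δ) * volume Q +
        2 ^ n * ENNReal.ofReal (δ / (δ + 1)) * ∫⁻ x, M x ^ (1 + δ) ∂ν) :=
        _root_.mul_le_mul_right hmain _
    _ = A ^ (1 + δ) + 2 ^ n * ENNReal.ofReal (δ / (δ + 1)) *
        ((volume Q)⁻¹ * ∫⁻ x, M x ^ (1 + δ) ∂ν) := by
        rw [mul_add]
        congr 1
        · rw [mul_comm (A ^ (1 + δ)) (volume Q), ← mul_assoc,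
            ENNReal.inv_mul_cancel hvol0 hvolT, one_mul]
        · ring

end
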